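/- arXiv:1610.03951 — 4 statements merged into one kernel-verified Lean document; each statement's English description precedes it below -/
import Mathlib

section
/- Let n ≥ 1 and d ≥ 1 be integers and let P_1, …, P_n ∈ ℂ[x_0, …, x_n] be homogeneous polynomials of degree d forming a regular sequence in ℂ[x_0, …, x_n]. Let u be a positive integer divisible by d, and let V_u denote the ℂ-vector space of homogeneous polynomials of degree u in ℂ[x_0, …, x_n] together with 0. For (i) = (i_1, …, i_n) ∈ ℕ^n with σ(i) := i_1 + ⋯ + i_n ≤ u/d, define the subspace W_{(i)} = Σ_{(j) ≥ (i)} P_1^{j_1} ⋯ P_n^{j_n} · V_{u − d σ(j)}, where the sum is over (j) ∈ ℕ^n with d σ(j) ≤ u and (j) ≥ (i) in the lexicographic order. If (i)' is the immediate successor of (i) in the lexicographic ordering among such tuples and d σ(i) < u − n d, then dim_ℂ (W_{(i)} / W_{(i)'}) = d^n. -/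
open MvPolynomial

/-- The Corvaja–Zannier filtration: for a tuple `i ∈ ℕ^n`,
`W_{(i)} = Σ_{(j) ≥ (i), dσ(j) ≤ u} P_1^{j_1} ⋯ P_n^{j_n} · V_{u − dσ(j)}`,
a subspace of the space `V_u` of homogeneous polynomials of degree `u`. -/
noncomputable def czFiltration (n d u : ℕ)
    (P : Fin n → MvPolynomial (Fin (n + 1)) ℂ) (i : Fin n → ℕ) :
    Submodule ℂ (MvPolynomial (Fin (n + 1)) ℂ) :=
  ⨆ (j : Fin n → ℕ) (_ : toLex i ≤ toLex j) (_ : d * (∑ t, j t) ≤ u),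
    Submodule.map (LinearMap.mulLeft ℂ (∏ t, P t ^ j t))
      (homogeneousSubmodule (Fin (n + 1)) ℂ (u - d * (∑ t, j t)))


namespace CZ

variable {σ : Type*}

variable {σ : Type*}

lemma comp_mul_homog {x c : MvPolynomial σ ℂ} {d m : ℕ} (hx : x.IsHomogeneous d) (hdm : d ≤ m) :
    homogeneousComponent m (x * c) = x * homogeneousComponent (m - d) c := by
  conv_lhs => rw [← sum_homogeneousComponent c, Finset.mul_sum, map_sum]
  have key : ∀ j : ℕ, homogeneousComponent m (x * homogeneousComponent j c)
      = if j = m - d then x * homogeneousComponent j c else 0 := by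
    intro j
    rw [homogeneousComponent_of_mem
      ((mem_homogeneousSubmodule _ _).2 (hx.mul (homogeneousComponent_isHomogeneous j c)))]
    congr 1
    simp only [eq_iff_iff]
    omega
  simp_rw [key]
  rw [Finset.sum_ite_eq' (Finset.range (c.totalDegree + 1)) (m - d)
    (fun j => x * homogeneousComponent j c)]
  split_ifs with h
  · rfl
  · rw [homogeneousComponent_eq_zero, mul_zero]
    simp only [Finset.mem_range] at h
    omega

lemma comp_mul_homog_low {x c : MvPolynomial σ ℂ} {d m : ℕ} (hx : x.IsHomogeneous d) (hdm : m < d) :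
    homogeneousComponent m (x * c) = 0 := by
  conv_lhs => rw [← sum_homogeneousComponent c, Finset.mul_sum, map_sum]
  have key : ∀ j : ℕ, homogeneousComponent m (x * homogeneousComponent j c) = 0 := by
    intro j
    rw [homogeneousComponent_of_mem
      ((mem_homogeneousSubmodule _ _).2 (hx.mul (homogeneousComponent_isHomogeneous j c)))]
    rw [if_neg]
    omega
  simp_rw [key]
  exact Finset.sum_const_zero

lemma homog_span_low {d m : ℕ} (hmd : m < d) {S : Set (MvPolynomial σ ℂ)}
    (hS : ∀ x ∈ S, x.IsHomogeneous d) {g : MvPolynomial σ ℂ}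
    (hg : g.IsHomogeneous m) (hmem : g ∈ Ideal.span S) : g = 0 := by
  obtain ⟨c, hsupp, rfl⟩ := Submodule.mem_span_set.mp hmem
  have : homogeneousComponent m (c.sum fun mi r => r • mi) = c.sum fun mi r => r • mi := by
    rw [homogeneousComponent_of_mem ((mem_homogeneousSubmodule _ _).2 hg), if_pos rfl]
  rw [← this, Finsupp.sum, map_sum]
  refine Finset.sum_eq_zero fun x hxs => ?_
  have hx : x.IsHomogeneous d := hS x (hsupp hxs)
  rw [smul_eq_mul, mul_comm]
  exact comp_mul_homog_low hx hmd



lemma span_homog_decomp {n d m : ℕ} (hn : n ≠ 0) (hdm : d ≤ m)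
    {P : Fin n → MvPolynomial σ ℂ} (hP : ∀ t, (P t).IsHomogeneous d)
    (Q : Fin n → Prop) {g : MvPolynomial σ ℂ} (hg : g.IsHomogeneous m)
    (hmem : g ∈ Ideal.span {x | ∃ s, Q s ∧ x = P s}) :
    ∃ h : Fin n → MvPolynomial σ ℂ, (∀ s, (h s).IsHomogeneous (m - d)) ∧
      (∀ s, ¬ Q s → h s = 0) ∧ g = ∑ s, P s * h s := by
  haveI : NeZero n := ⟨hn⟩
  obtain ⟨c, hsupp, rfl⟩ := Submodule.mem_span_set.mp hmem
  classical
  set F : MvPolynomial σ ℂ → Fin n := fun x =>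
    if hx : ∃ s, Q s ∧ x = P s then hx.choose else 0 with hF
  have hF1 : ∀ x ∈ c.support, Q (F x) ∧ x = P (F x) := by
    intro x hx
    have hx' : ∃ s, Q s ∧ x = P s := hsupp hx
    simp only [hF, dif_pos hx']
    exact hx'.choose_spec
  refine ⟨fun s => ∑ x ∈ c.support.filter (fun x => F x = s),
      homogeneousComponent (m - d) (c x), ?_, ?_, ?_⟩
  · intro s
    exact IsHomogeneous.sum _ _ _ fun x _ => homogeneousComponent_isHomogeneous _ _
  · intro s hs
    show (∑ x ∈ c.support.filter (fun x => F x = s),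
      homogeneousComponent (m - d) (c x)) = 0
    rw [Finset.filter_false_of_mem, Finset.sum_empty]
    intro x hx h
    exact hs (h ▸ (hF1 x hx).1)
  · show (c.sum fun mi r => r • mi) = ∑ s, P s * ∑ x ∈ c.support.filter (fun x => F x = s),
      homogeneousComponent (m - d) (c x)
    have e1 : (c.sum fun mi r => r • mi) =
        homogeneousComponent m (c.sum fun mi r => r • mi) := by
      rw [homogeneousComponent_of_mem ((mem_homogeneousSubmodule _ _).2 hg), if_pos rfl]
    calc (c.sum fun mi r => r • mi)
        = ∑ x ∈ c.support, x * homogeneousComponent (m - d) (c x) := by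
          rw [e1, Finsupp.sum, map_sum]
          refine Finset.sum_congr rfl fun x hx => ?_
          rw [smul_eq_mul, mul_comm (c x) x, comp_mul_homog ((hF1 x hx).2 ▸ hP (F x)) hdm]
      _ = ∑ s, ∑ x ∈ c.support.filter (fun x => F x = s),
            x * homogeneousComponent (m - d) (c x) :=
          (Finset.sum_fiberwise_of_maps_to (fun x _ => Finset.mem_univ (F x)) _).symm
      _ = ∑ s, P s * ∑ x ∈ c.support.filter (fun x => F x = s),
            homogeneousComponent (m - d) (c x) := by
          refine Finset.sum_congr rfl fun s _ => ?_
          rw [Finset.mul_sum]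
          refine Finset.sum_congr rfl fun x hx => ?_
          simp only [Finset.mem_filter] at hx
          rw [(hF1 x hx.1).2, hx.2]

lemma pow_reg {n : ℕ} {P : Fin n → MvPolynomial (Fin (n + 1)) ℂ}
    (hPreg : ∀ t : Fin n, ∀ f : MvPolynomial (Fin (n + 1)) ℂ,
      P t * f ∈ Ideal.span {g | ∃ s : Fin n, s < t ∧ g = P s} →
      f ∈ Ideal.span {g | ∃ s : Fin n, s < t ∧ g = P s})
    (t : Fin n) (a : ℕ) (f : MvPolynomial (Fin (n + 1)) ℂ)
    (h : P t ^ a * f ∈ Ideal.span {g | ∃ s : Fin n, s < t ∧ g = P s}) :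
    f ∈ Ideal.span {g | ∃ s : Fin n, s < t ∧ g = P s} := by
  induction a generalizing f with
  | zero => simpa using h
  | succ a ih =>
    refine ih _ (hPreg t _ ?_)
    have e : P t ^ (a + 1) * f = P t * (P t ^ a * f) := by ring
    rw [← e]
    exact h

lemma P_ne_zero {n d : ℕ} (hd : 1 ≤ d) {P : Fin n → MvPolynomial (Fin (n + 1)) ℂ}
    (hPhom : ∀ t, (P t).IsHomogeneous d)
    (hPreg : ∀ t : Fin n, ∀ f : MvPolynomial (Fin (n + 1)) ℂ,
      P t * f ∈ Ideal.span {g | ∃ s : Fin n, s < t ∧ g = P s} →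
      f ∈ Ideal.span {g | ∃ s : Fin n, s < t ∧ g = P s})
    (t : Fin n) : P t ≠ 0 := by
  intro h0
  have h1 : (1 : MvPolynomial (Fin (n + 1)) ℂ) ∈
      Ideal.span {g | ∃ s : Fin n, s < t ∧ g = P s} := by
    refine hPreg t 1 ?_
    rw [h0, zero_mul]
    exact zero_mem _
  have := homog_span_low (d := d) hd (S := {g | ∃ s : Fin n, s < t ∧ g = P s})
    (fun x hx => by obtain ⟨s, _, rfl⟩ := hx; exact hPhom s) (isHomogeneous_one _ ℂ) h1
  exact one_ne_zero this




variable {n : ℕ} (P : Fin n → MvPolynomial (Fin (n + 1)) ℂ)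

noncomputable def Ilow (k : ℕ) : Ideal (MvPolynomial (Fin (n + 1)) ℂ) :=
  Ideal.span {g | ∃ s : Fin n, (s : ℕ) < k ∧ g = P s}

noncomputable def prodHigh (k : ℕ) (j : Fin n → ℕ) : MvPolynomial (Fin (n + 1)) ℂ :=
  ∏ t ∈ Finset.univ.filter (fun t : Fin n => k ≤ (t : ℕ)), P t ^ j t

def lexAbove (k : ℕ) (i j : Fin n → ℕ) : Prop :=
  ∃ s : Fin n, k ≤ (s : ℕ) ∧ (∀ t : Fin n, k ≤ (t : ℕ) → t < s → j t = i t) ∧ i s < j s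

noncomputable def Jhigh (k : ℕ) (i : Fin n → ℕ) : Ideal (MvPolynomial (Fin (n + 1)) ℂ) :=
  Ideal.span {g | ∃ j : Fin n → ℕ, lexAbove k i j ∧ g = prodHigh P k j}

lemma Ilow_mono {k l : ℕ} (hkl : k ≤ l) : Ilow P k ≤ Ilow P l :=
  Ideal.span_mono (fun g => by rintro ⟨s, hs, rfl⟩; exact ⟨s, by omega, rfl⟩)

lemma Ilow_ge {k : ℕ} (hk : n ≤ k) : Ilow P k = Ilow P n := by
  unfold Ilow
  congr 1
  ext g
  constructor
  · rintro ⟨s, _, rfl⟩; exact ⟨s, s.isLt, rfl⟩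
  · rintro ⟨s, _, rfl⟩; exact ⟨s, by omega, rfl⟩

lemma Ilow_eq_span (t : Fin n) :
    Ideal.span {g | ∃ s : Fin n, s < t ∧ g = P s} = Ilow P (t : ℕ) := rfl

lemma prodHigh_top {k : ℕ} (hk : n ≤ k) (j : Fin n → ℕ) : prodHigh P k j = 1 := by
  unfold prodHigh
  rw [Finset.filter_false_of_mem (fun t _ => by omega), Finset.prod_empty]

lemma prodHigh_succ {k : ℕ} (hk : k < n) (j : Fin n → ℕ) :
    prodHigh P k j = P ⟨k, hk⟩ ^ j ⟨k, hk⟩ * prodHigh P (k + 1) j := by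
  unfold prodHigh
  have he : Finset.univ.filter (fun t : Fin n => k ≤ (t : ℕ))
      = insert ⟨k, hk⟩ (Finset.univ.filter (fun t : Fin n => k + 1 ≤ (t : ℕ))) := by
    ext t
    simp only [Finset.mem_filter, Finset.mem_univ, true_and, Finset.mem_insert, Fin.ext_iff]
    omega
  rw [he, Finset.prod_insert (by simp)]

lemma key (hPreg : ∀ t : Fin n, ∀ f : MvPolynomial (Fin (n + 1)) ℂ,
      P t * f ∈ Ideal.span {g | ∃ s : Fin n, s < t ∧ g = P s} →
      f ∈ Ideal.span {g | ∃ s : Fin n, s < t ∧ g = P s}) :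
    ∀ (c k : ℕ), n ≤ k + c → ∀ (i : Fin n → ℕ) (f : MvPolynomial (Fin (n + 1)) ℂ),
    prodHigh P k i * f ∈ Ilow P k ⊔ Jhigh P k i → f ∈ Ilow P n := by
  intro c
  induction c with
  | zero =>
    intro k hk i f h
    have hJ : Jhigh P k i = ⊥ := by
      unfold Jhigh
      convert Ideal.span_empty
      ext g
      simp only [Set.mem_setOf_eq, Set.mem_empty_iff_false, iff_false]
      rintro ⟨j, ⟨s, hs, _⟩, _⟩
      omega
    rw [hJ, sup_bot_eq, prodHigh_top P (by omega) i, one_mul, Ilow_ge P (by omega)] at h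
    exact h
  | succ c ih =>
    intro k hk i f h
    by_cases hkn : n ≤ k
    · exact ih k (by omega) i f h
    push_neg at hkn
    classical
    set tk : Fin n := ⟨k, hkn⟩ with htk
    rw [Submodule.mem_sup] at h
    obtain ⟨a, ha, b, hb, hab⟩ := h
    obtain ⟨cc, hsupp, hsum⟩ := Submodule.mem_span_set.mp hb
    have hsum' : b = ∑ x ∈ cc.support, cc x * x := by
      rw [← hsum, Finsupp.sum]
      rfl
    set Jc : MvPolynomial (Fin (n + 1)) ℂ → (Fin n → ℕ) := fun x =>
      if hx : ∃ j, lexAbove k i j ∧ x = prodHigh P k j then hx.choose else i with hJc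
    have hJ1 : ∀ x ∈ cc.support, lexAbove k i (Jc x) ∧ x = prodHigh P k (Jc x) := by
      intro x hx
      have hx' : ∃ j, lexAbove k i j ∧ x = prodHigh P k j := hsupp hx
      simp only [hJc, dif_pos hx']
      exact hx'.choose_spec
    have hge : ∀ x ∈ cc.support, i tk ≤ Jc x tk := by
      intro x hx
      obtain ⟨⟨s, hs1, hs2, hs3⟩, _⟩ := hJ1 x hx
      rcases lt_or_eq_of_le (show tk ≤ s from by
        simp only [htk, Fin.le_def, Fin.val_mk]; exact hs1) with hlt | heq
      · rw [hs2 tk (le_refl k) hlt]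
      · rw [← heq] at hs3; omega
    set s0 := cc.support.filter (fun x => Jc x tk = i tk) with hs0
    set s1 := cc.support.filter (fun x => ¬ (Jc x tk = i tk)) with hs1
    set w := ∑ x ∈ s1, cc x * (P tk ^ (Jc x tk - i tk - 1) * prodHigh P (k + 1) (Jc x)) with hw
    set y := prodHigh P (k + 1) i * f - (∑ x ∈ s0, cc x * prodHigh P (k + 1) (Jc x))
      - P tk * w with hy
    have hS0 : P tk ^ i tk * (∑ x ∈ s0, cc x * prodHigh P (k + 1) (Jc x))
        = ∑ x ∈ s0, cc x * x := by
      rw [Finset.mul_sum]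
      refine Finset.sum_congr rfl fun x hx => ?_
      rw [hs0, Finset.mem_filter] at hx
      obtain ⟨hxs, hx2⟩ := hx
      obtain ⟨-, hxe⟩ := hJ1 x hxs
      set j := Jc x with hj
      rw [hxe, prodHigh_succ P hkn j, ← htk, hx2]
      ring
    have hw' : P tk ^ i tk * (P tk * w) = ∑ x ∈ s1, cc x * x := by
      rw [hw, Finset.mul_sum, Finset.mul_sum]
      refine Finset.sum_congr rfl fun x hx => ?_
      rw [hs1, Finset.mem_filter] at hx
      obtain ⟨hxs, hx2⟩ := hx
      have hgt : i tk < Jc x tk := lt_of_le_of_ne (hge x hxs) (fun h => hx2 h.symm)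
      obtain ⟨-, hxe⟩ := hJ1 x hxs
      set j := Jc x with hj
      have hpow : P tk ^ i tk * (P tk * P tk ^ (j tk - i tk - 1)) = P tk ^ (j tk) := by
        rw [← pow_succ' (P tk), ← pow_add]
        congr 1
        omega
      rw [hxe, prodHigh_succ P hkn j, ← htk]
      generalize cc (P tk ^ j tk * prodHigh P (k + 1) j) = C
      calc P tk ^ i tk * (P tk * (C * (P tk ^ (j tk - i tk - 1) * prodHigh P (k + 1) j)))
          = C * ((P tk ^ i tk * (P tk * P tk ^ (j tk - i tk - 1)))
            * prodHigh P (k + 1) j) := by ring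
        _ = C * (P tk ^ (j tk) * prodHigh P (k + 1) j) := by rw [hpow]
    have hfa : P tk ^ i tk * (prodHigh P (k + 1) i * f) = a + b := by
      rw [hab, prodHigh_succ P hkn i, ← htk]
      ring
    have hkey : P tk ^ i tk * y = a := by
      rw [hy, mul_sub, mul_sub, hS0, hw', hfa, hsum',
        ← Finset.sum_filter_add_sum_filter_not cc.support (fun x => Jc x tk = i tk)
          (fun x => cc x * x), ← hs0, ← hs1]
      ring
    have hyk : y ∈ Ideal.span {g | ∃ s : Fin n, s < tk ∧ g = P s} := by
      refine pow_reg hPreg tk (i tk) y ?_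
      rw [hkey, Ilow_eq_span P tk]
      simpa only [htk, Fin.val_mk] using ha
    have hy' : y ∈ Ilow P k := by
      rw [Ilow_eq_span P tk] at hyk
      simpa only [htk, Fin.val_mk] using hyk
    refine ih (k + 1) (by omega) i f ?_
    rw [Submodule.mem_sup]
    refine ⟨y + P tk * w, ?_, ∑ x ∈ s0, cc x * prodHigh P (k + 1) (Jc x), ?_, by rw [hy]; ring⟩
    · refine Submodule.add_mem _ (Ilow_mono P (by omega) hy') ?_
      exact Ideal.mul_mem_right w _ (Ideal.subset_span
        ⟨tk, by simp only [htk, Fin.val_mk]; omega, rfl⟩)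
    · refine Submodule.sum_mem _ fun x hx => ?_
      refine Ideal.mul_mem_left _ _ (Ideal.subset_span ⟨Jc x, ?_, rfl⟩)
      rw [hs0, Finset.mem_filter] at hx
      obtain ⟨⟨s, hsk, hst, hslt⟩, -⟩ := hJ1 x hx.1
      have hsne : (s : ℕ) ≠ k := by
        intro hh
        have hstk : s = tk := Fin.ext (by simp only [htk, Fin.val_mk]; exact hh)
        rw [hstk] at hslt
        omega
      exact ⟨s, by omega, fun t ht1 ht2 => hst t (by omega) ht2, hslt⟩

def czSet (n d k m : ℕ) : Type :=
  {a : Fin (n + 1) → ℕ // (∑ t, a t) = m ∧ ∀ t : Fin n, (t : ℕ) < k → a t.succ < d}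

instance (n d k m : ℕ) : Finite (czSet n d k m) := by
  refine Finite.of_injective
    (fun a => (fun t => (⟨a.1 t, ?_⟩ : Fin (m + 1)) : Fin (n + 1) → Fin (m + 1))) ?_
  · have h1 : a.1 t ≤ ∑ s, a.1 s :=
      Finset.single_le_sum (fun s _ => Nat.zero_le _) (Finset.mem_univ t)
    have h2 := a.2.1
    omega
  · intro a b hab
    refine Subtype.ext (funext fun t => ?_)
    have := congrFun hab t
    simpa [Fin.ext_iff] using this

noncomputable def Nc (n d k m : ℕ) : ℕ := Nat.card (czSet n d k m)

lemma sum_update_add {q : ℕ} (f : Fin q → ℕ) (x : Fin q) (v : ℕ) :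
    (∑ t, Function.update f x v t) + f x = (∑ t, f t) + v := by
  classical
  rw [← Finset.add_sum_erase _ (Function.update f x v) (Finset.mem_univ x),
      ← Finset.add_sum_erase _ f (Finset.mem_univ x), Function.update_self]
  have he : ∑ t ∈ Finset.univ.erase x, Function.update f x v t
      = ∑ t ∈ Finset.univ.erase x, f t :=
    Finset.sum_congr rfl fun t ht => Function.update_of_ne (Finset.ne_of_mem_erase ht) _ _
  omega

lemma Nc_low {n d k m : ℕ} (hmd : m < d) : Nc n d k m = Nc n d 0 m := by
  refine Nat.card_congr (Equiv.subtypeEquivRight fun a => ?_)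
  constructor
  · rintro ⟨h1, _⟩; exact ⟨h1, fun t ht => by omega⟩
  · rintro ⟨h1, _⟩
    refine ⟨h1, fun t _ => ?_⟩
    have : a t.succ ≤ ∑ s, a s :=
      Finset.single_le_sum (fun s _ => Nat.zero_le _) (Finset.mem_univ t.succ)
    omega

lemma Nc_rec {n d k m : ℕ} (hk : k < n) (hdm : d ≤ m) :
    Nc n d k m = Nc n d (k + 1) m + Nc n d k (m - d) := by
  classical
  set tks : Fin (n + 1) := (⟨k, hk⟩ : Fin n).succ with htks
  have hsucc_eq : ∀ t : Fin n, t.succ = tks ↔ (t : ℕ) = k := by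
    intro t
    rw [htks, Fin.succ_inj, Fin.ext_iff]
  have e : czSet n d k m ≃ (czSet n d (k + 1) m) ⊕ (czSet n d k (m - d)) := by
    refine ⟨fun a => if h : a.1 tks < d then Sum.inl ⟨a.1, a.2.1, fun t ht => ?_⟩
        else Sum.inr ⟨Function.update a.1 tks (a.1 tks - d), ?_, fun t ht => ?_⟩,
      fun b => b.elim (fun a => ⟨a.1, a.2.1, fun t ht => a.2.2 t (by omega)⟩)
        (fun a => ⟨Function.update a.1 tks (a.1 tks + d), ?_, fun t ht => ?_⟩),
      fun a => ?_, fun b => ?_⟩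
    · rcases Nat.lt_succ_iff_lt_or_eq.mp ht with h' | h'
      · exact a.2.2 t h'
      · rwa [show t.succ = tks from (hsucc_eq t).mpr h']
    · have hs := sum_update_add a.1 tks (a.1 tks - d)
      have := a.2.1
      omega
    · rw [Function.update_of_ne (fun hc => by have := (hsucc_eq t).mp hc; omega)]
      exact a.2.2 t ht
    · have hs := sum_update_add a.1 tks (a.1 tks + d)
      have h1 : a.1 tks ≤ ∑ s, a.1 s :=
        Finset.single_le_sum (fun s _ => Nat.zero_le _) (Finset.mem_univ tks)
      have h2 := a.2.1
      have h3 : m - d + d = m := by omega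
      omega
    · rw [Function.update_of_ne (fun hc => by have := (hsucc_eq t).mp hc; omega)]
      exact a.2.2 t ht
    · by_cases h : a.1 tks < d
      · simp only [dif_pos h, Sum.elim_inl]
        exact Subtype.ext rfl
      · simp only [dif_neg h, Sum.elim_inr]
        refine Subtype.ext (funext fun t => ?_)
        show Function.update (Function.update a.1 tks (a.1 tks - d)) tks
          (Function.update a.1 tks (a.1 tks - d) tks + d) t = a.1 t
        rw [Function.update_self, Function.update_idem]
        by_cases htt : t = tks
        · subst htt
          rw [Function.update_self]
          omega
        · rw [Function.update_of_ne htt]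
    · rcases b with a | a
      · have hc : a.1 tks < d := by
          rw [htks]
          exact a.2.2 ⟨k, hk⟩ (by simp)
        dsimp only [Sum.elim_inl]
        erw [dif_pos hc]
        exact congrArg Sum.inl (Subtype.ext (α := Fin (n + 1) → ℕ) rfl)
      · have hc : ¬ (Function.update a.1 tks (a.1 tks + d) tks < d) := by
          rw [Function.update_self]
          omega
        dsimp only [Sum.elim_inr]
        erw [dif_neg hc]
        refine congrArg Sum.inr (Subtype.ext (α := Fin (n + 1) → ℕ) (funext fun t => ?_))
        show Function.update (Function.update a.1 tks (a.1 tks + d)) tks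
          (Function.update a.1 tks (a.1 tks + d) tks - d) t = a.1 t
        rw [Function.update_self, Function.update_idem]
        by_cases htt : t = tks
        · subst htt
          rw [Function.update_self]
          omega
        · rw [Function.update_of_ne htt]
  rw [Nc, Nat.card_congr e, Nat.card_sum]
  rfl

lemma Nc_top {n d m : ℕ} (hm : n * (d - 1) ≤ m) : Nc n d n m = d ^ n := by
  have e : czSet n d n m ≃ (Fin n → Fin d) := by
    refine ⟨fun a t => ⟨a.1 t.succ, a.2.2 t t.isLt⟩,
      fun b => ⟨fun t => Fin.cases (m - ∑ s, (b s : ℕ)) (fun s => (b s : ℕ)) t, ?_, ?_⟩,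
      fun a => ?_, fun b => ?_⟩
    · have hb : ∑ s, (b s : ℕ) ≤ n * (d - 1) := by
        calc ∑ s, (b s : ℕ) ≤ ∑ s : Fin n, (d - 1) :=
              Finset.sum_le_sum (fun s _ => by have := (b s).isLt; omega)
          _ = n * (d - 1) := by
              rw [Finset.sum_const, Finset.card_univ, Fintype.card_fin, smul_eq_mul]
      rw [Fin.sum_univ_succ]
      simp only [Fin.cases_zero, Fin.cases_succ]
      omega
    · intro t ht
      simp only [Fin.cases_succ]
      exact (b t).isLt
    · refine Subtype.ext (funext fun t => ?_)
      induction t using Fin.cases with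
      | zero =>
        simp only [Fin.cases_zero]
        have h2 := a.2.1
        rw [Fin.sum_univ_succ] at h2
        omega
      | succ s => simp only [Fin.cases_succ]
    · funext t
      refine Fin.ext ?_
      simp only [Fin.cases_succ]
  rw [Nc, Nat.card_congr e, Nat.card_eq_fintype_card, Fintype.card_fun]
  simp

lemma degree_eq_sum {q : ℕ} (x : Fin q →₀ ℕ) : x.degree = ∑ t, x t := by
  rw [Finsupp.degree]
  exact Finset.sum_subset (Finset.subset_univ _)
    (fun t _ ht => Finsupp.notMem_support_iff.mp ht)

instance fdV (q m : ℕ) : FiniteDimensional ℂ (homogeneousSubmodule (Fin q) ℂ m) :=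
  Submodule.finiteDimensional_of_le (S₂ := restrictTotalDegree (Fin q) ℂ m)
    (fun p hp => (mem_restrictTotalDegree _ _ _).2
      ((mem_homogeneousSubmodule _ _).1 hp).totalDegree_le)

lemma Nc_zero_eq_finrank (n d m : ℕ) :
    Nc n d 0 m = Module.finrank ℂ (homogeneousSubmodule (Fin (n + 1)) ℂ m) := by
  classical
  have eqv : ↥{d' : (Fin (n + 1)) →₀ ℕ | d'.degree = m} ≃ czSet n d 0 m := by
    refine ⟨fun x => ⟨⇑x.1, by rw [← degree_eq_sum, x.2], fun t ht => by omega⟩,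
      fun a => ⟨Finsupp.equivFunOnFinite.symm a.1, ?_⟩, fun x => ?_, fun a => ?_⟩
    · show (Finsupp.equivFunOnFinite.symm a.1).degree = m
      rw [degree_eq_sum]
      have : ∀ t, (Finsupp.equivFunOnFinite.symm a.1) t = a.1 t := fun t => rfl
      simp only [this]
      exact a.2.1
    · exact Subtype.ext (Finsupp.equivFunOnFinite.symm_apply_apply x.1)
    · exact Subtype.ext rfl
  haveI : Finite ↥{d' : (Fin (n + 1)) →₀ ℕ | d'.degree = m} := Finite.of_equiv _ eqv.symm
  haveI : Fintype ↥{d' : (Fin (n + 1)) →₀ ℕ | d'.degree = m} := Fintype.ofFinite _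
  have e1 : (homogeneousSubmodule (Fin (n + 1)) ℂ m) ≃ₗ[ℂ]
      ({d' : (Fin (n + 1)) →₀ ℕ | d'.degree = m} →₀ ℂ) :=
    (LinearEquiv.ofEq _ _ (homogeneousSubmodule_eq_finsupp_supported _ _ m)).trans
      (AddMonoidAlgebra.supportedEquivFinsupp _)
  rw [e1.finrank_eq, Module.finrank_finsupp_self, ← Nat.card_eq_fintype_card]
  rw [Nc, Nat.card_congr eqv]

variable {n : ℕ}

noncomputable def IV (d : ℕ) (P : Fin n → MvPolynomial (Fin (n + 1)) ℂ) (k m : ℕ) :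
    Submodule ℂ (MvPolynomial (Fin (n + 1)) ℂ) :=
  (Ilow P k).restrictScalars ℂ ⊓ (homogeneousSubmodule (Fin (n + 1)) ℂ m)

instance (d : ℕ) (P : Fin n → MvPolynomial (Fin (n + 1)) ℂ) (k m : ℕ) :
    FiniteDimensional ℂ (IV d P k m) :=
  Submodule.finiteDimensional_of_le inf_le_right

lemma IV_zero (d : ℕ) (P : Fin n → MvPolynomial (Fin (n + 1)) ℂ) (m : ℕ) : IV d P 0 m = ⊥ := by
  have h : Ilow P 0 = ⊥ := by
    unfold Ilow
    convert Ideal.span_empty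
    ext g
    simp only [Set.mem_setOf_eq, Set.mem_empty_iff_false, iff_false]
    rintro ⟨s, hs, -⟩
    omega
  rw [IV, h]
  simp

lemma IV_low {d m : ℕ} (hmd : m < d) {P : Fin n → MvPolynomial (Fin (n + 1)) ℂ}
    (hPhom : ∀ t, (P t).IsHomogeneous d) (k : ℕ) : IV d P k m = ⊥ := by
  rw [eq_bot_iff]
  rintro x ⟨hxI, hxV⟩
  have hx0 : x = 0 := homog_span_low hmd
    (fun g hg => by obtain ⟨s, -, rfl⟩ := hg; exact hPhom s)
    ((mem_homogeneousSubmodule _ _).1 hxV) hxI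
  simp [hx0]

lemma finrank_IV_rec {d : ℕ} {P : Fin n → MvPolynomial (Fin (n + 1)) ℂ}
    (hPhom : ∀ t, (P t).IsHomogeneous d)
    (hPreg : ∀ t : Fin n, ∀ f : MvPolynomial (Fin (n + 1)) ℂ,
      P t * f ∈ Ideal.span {g | ∃ s : Fin n, s < t ∧ g = P s} →
      f ∈ Ideal.span {g | ∃ s : Fin n, s < t ∧ g = P s})
    {k m : ℕ} (hk : k < n) (hdm : d ≤ m) (hd : 1 ≤ d) :
    Module.finrank ℂ (IV d P (k + 1) m) + Module.finrank ℂ (IV d P k (m - d))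
      = Module.finrank ℂ (IV d P k m)
        + Module.finrank ℂ (homogeneousSubmodule (Fin (n + 1)) ℂ (m - d)) := by
  classical
  set tk : Fin n := ⟨k, hk⟩ with htk
  have hP0 : P tk ≠ 0 := P_ne_zero hd hPhom hPreg tk
  have hinj : Function.Injective (LinearMap.mulLeft ℂ (P tk)) := by
    intro x y hxy
    simp only [LinearMap.mulLeft_apply] at hxy
    exact mul_left_cancel₀ hP0 hxy
  set Vmd := homogeneousSubmodule (Fin (n + 1)) ℂ (m - d) with hVmd
  set B : Submodule ℂ (MvPolynomial (Fin (n + 1)) ℂ) :=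
    Submodule.map (LinearMap.mulLeft ℂ (P tk)) Vmd with hB
  have hmulhom : ∀ (f : MvPolynomial (Fin (n + 1)) ℂ), f.IsHomogeneous (m - d) →
      (P tk * f).IsHomogeneous m := by
    intro f hf
    have := (hPhom tk).mul hf
    rwa [Nat.add_sub_cancel' hdm] at this
  have hsup : IV d P (k + 1) m = IV d P k m ⊔ B := by
    apply le_antisymm
    · rintro x ⟨hxI, hxV⟩
      obtain ⟨h, hhom, hQ0, hdecomp⟩ := span_homog_decomp (by omega) hdm hPhom
        (fun s : Fin n => (s : ℕ) < k + 1) ((mem_homogeneousSubmodule _ _).1 hxV) hxI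
      have hsplit : x = (∑ s ∈ Finset.univ.filter (fun s : Fin n => (s : ℕ) < k),
          P s * h s) + P tk * h tk := by
        rw [hdecomp, ← Finset.sum_filter_add_sum_filter_not Finset.univ
          (fun s : Fin n => (s : ℕ) < k)]
        congr 1
        rw [Finset.sum_eq_single tk]
        · intro b hb hbne
          simp only [Finset.mem_filter, Finset.mem_univ, true_and, not_lt] at hb
          have hbk : ¬ ((b : ℕ) < k + 1) := by
            have : (b : ℕ) ≠ k := fun hc => hbne (Fin.ext (by simp [htk, hc]))
            omega
          rw [hQ0 b hbk, mul_zero]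
        · intro hc
          exact absurd (by simp [htk] : tk ∈ Finset.univ.filter
            (fun s : Fin n => ¬ (s : ℕ) < k)) hc
      rw [hsplit]
      apply Submodule.add_mem
      · apply Submodule.mem_sup_left
        refine ⟨?_, ?_⟩
        · refine Submodule.sum_mem _ fun s hs => ?_
          simp only [Finset.mem_filter] at hs
          exact Ideal.mul_mem_right (h s) _ (Ideal.subset_span ⟨s, hs.2, rfl⟩)
        · refine Submodule.sum_mem _ fun s hs => ?_
          exact (mem_homogeneousSubmodule _ _).2 (by
            have := (hPhom s).mul (hhom s)
            rwa [Nat.add_sub_cancel' hdm] at this)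
      · exact Submodule.mem_sup_right ⟨h tk, hhom tk, rfl⟩
    · apply sup_le
      · exact inf_le_inf (fun x hx => Ilow_mono P (by omega) hx) le_rfl
      · rintro x ⟨f, hf, rfl⟩
        refine ⟨?_, ?_⟩
        · exact Ideal.mul_mem_right f _ (Ideal.subset_span ⟨tk, by simp [htk], rfl⟩)
        · exact (mem_homogeneousSubmodule _ _).2
            (hmulhom f ((mem_homogeneousSubmodule _ _).1 hf))
  have hinf : IV d P k m ⊓ B = Submodule.map (LinearMap.mulLeft ℂ (P tk)) (IV d P k (m - d)) := by
    apply le_antisymm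
    · rintro x ⟨⟨hxI, -⟩, f, hf, rfl⟩
      refine ⟨f, ⟨?_, hf⟩, rfl⟩
      show f ∈ Ilow P k
      have hfI : f ∈ Ideal.span {g | ∃ s : Fin n, s < tk ∧ g = P s} := by
        refine hPreg tk f ?_
        rw [Ilow_eq_span P tk]
        exact hxI
      rw [Ilow_eq_span P tk] at hfI
      exact hfI
    · rintro x ⟨f, ⟨hfI, hfV⟩, rfl⟩
      refine ⟨⟨?_, ?_⟩, f, hfV, rfl⟩
      · exact Ideal.mul_mem_left _ _ hfI
      · exact (mem_homogeneousSubmodule _ _).2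
          (hmulhom f ((mem_homogeneousSubmodule _ _).1 hfV))
  have h1 := Submodule.finrank_sup_add_finrank_inf_eq (IV d P k m) B
  rw [← hsup, hinf] at h1
  have h2 : Module.finrank ℂ B = Module.finrank ℂ Vmd :=
    ((Submodule.equivMapOfInjective _ hinj Vmd).finrank_eq).symm
  have h3 : Module.finrank ℂ (Submodule.map (LinearMap.mulLeft ℂ (P tk)) (IV d P k (m - d)))
      = Module.finrank ℂ (IV d P k (m - d)) :=
    ((Submodule.equivMapOfInjective _ hinj (IV d P k (m - d))).finrank_eq).symm
  rw [h2, h3] at h1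
  omega

lemma finrank_IV_add_Nc {d : ℕ} {P : Fin n → MvPolynomial (Fin (n + 1)) ℂ}
    (hPhom : ∀ t, (P t).IsHomogeneous d)
    (hPreg : ∀ t : Fin n, ∀ f : MvPolynomial (Fin (n + 1)) ℂ,
      P t * f ∈ Ideal.span {g | ∃ s : Fin n, s < t ∧ g = P s} →
      f ∈ Ideal.span {g | ∃ s : Fin n, s < t ∧ g = P s})
    (hd : 1 ≤ d) :
    ∀ k, k ≤ n → ∀ m, Module.finrank ℂ (IV d P k m) + Nc n d k m
      = Module.finrank ℂ (homogeneousSubmodule (Fin (n + 1)) ℂ m) := by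
  intro k
  induction k with
  | zero =>
    intro _ m
    rw [IV_zero, finrank_bot, Nc_zero_eq_finrank, zero_add]
  | succ k ih =>
    intro hkn m
    by_cases hmd : m < d
    · rw [IV_low hmd hPhom, finrank_bot, Nc_low hmd, Nc_zero_eq_finrank, zero_add]
    push_neg at hmd
    have hk : k < n := by omega
    have h1 := finrank_IV_rec hPhom hPreg hk hmd hd
    have h2 := Nc_rec (d := d) (m := m) hk hmd
    have h3 := ih (by omega) m
    have h4 := ih (by omega) (m - d)
    omega

lemma prodHigh_zero (P : Fin n → MvPolynomial (Fin (n + 1)) ℂ) (j : Fin n → ℕ) :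
    prodHigh P 0 j = ∏ t, P t ^ j t := by
  unfold prodHigh
  congr 1
  exact Finset.filter_true_of_mem (fun t _ => Nat.zero_le _)

lemma lexAbove_zero {i j : Fin n → ℕ} (h : toLex i < toLex j) : lexAbove 0 i j := by
  obtain ⟨s, hs1, hs2⟩ := (h : ∃ s, (∀ t, t < s → i t = j t) ∧ i s < j s)
  exact ⟨s, Nat.zero_le _, fun t _ ht => (hs1 t ht).symm, hs2⟩

end CZ

set_option maxHeartbeats 1000000 in
set_option synthInstance.maxHeartbeats 1000000 in
/-- If `P_1, …, P_n` are homogeneous of degree `d` and form a regular sequence in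
`ℂ[x_0, …, x_n]`, `d ∣ u`, `(i)'` is the immediate lexicographic successor of
`(i)` among tuples `(j)` with `dσ(j) ≤ u`, and `dσ(i) < u − nd`, then
`dim_ℂ (W_{(i)} / W_{(i)'}) = d^n`. -/
theorem stmt_6 (n d u : ℕ) (hn : 1 ≤ n) (hd : 1 ≤ d) (hu : 0 < u) (hdu : d ∣ u)
    (P : Fin n → MvPolynomial (Fin (n + 1)) ℂ)
    (hPhom : ∀ t, (P t).IsHomogeneous d)
    (hPreg : ∀ t : Fin n, ∀ f : MvPolynomial (Fin (n + 1)) ℂ,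
      P t * f ∈ Ideal.span {g | ∃ s : Fin n, s < t ∧ g = P s} →
      f ∈ Ideal.span {g | ∃ s : Fin n, s < t ∧ g = P s})
    (i i' : Fin n → ℕ)
    (hi : d * (∑ t, i t) ≤ u) (hi' : d * (∑ t, i' t) ≤ u)
    (hlt : toLex i < toLex i')
    (hsucc : ∀ j : Fin n → ℕ, d * (∑ t, j t) ≤ u → toLex i < toLex j →
      toLex i' ≤ toLex j)
    (hbound : d * (∑ t, i t) + n * d < u) :
    Module.finrank ℂ
      (↥(czFiltration n d u P i) ⧸
        Submodule.comap (czFiltration n d u P i).subtype (czFiltration n d u P i'))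
      = d ^ n := by
  classical
  have hnd : d ≤ n * d := Nat.le_mul_of_pos_left d (by omega)
  set m := u - d * (∑ t, i t) with hm
  have hdm : d ≤ m := by omega
  have hndm : n * d < m := by omega
  set Pi := ∏ t, P t ^ i t with hPi
  have le_cz : ∀ (i₀ : Fin n → ℕ) (j : Fin n → ℕ), toLex i₀ ≤ toLex j →
      d * (∑ t, j t) ≤ u →
      Submodule.map (LinearMap.mulLeft ℂ (∏ t, P t ^ j t))
        (homogeneousSubmodule (Fin (n + 1)) ℂ (u - d * (∑ t, j t)))
        ≤ czFiltration n d u P i₀ := by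
    intro i₀ j h1 h2
    unfold czFiltration
    refine le_trans ?_ (le_iSup (fun j => ⨆ (_ : toLex i₀ ≤ toLex j),
      ⨆ (_ : d * (∑ t, j t) ≤ u),
      Submodule.map (LinearMap.mulLeft ℂ (∏ t, P t ^ j t))
        (homogeneousSubmodule (Fin (n + 1)) ℂ (u - d * (∑ t, j t)))) j)
    refine le_trans ?_ (le_iSup (fun _ : toLex i₀ ≤ toLex j =>
      ⨆ (_ : d * (∑ t, j t) ≤ u),
      Submodule.map (LinearMap.mulLeft ℂ (∏ t, P t ^ j t))
        (homogeneousSubmodule (Fin (n + 1)) ℂ (u - d * (∑ t, j t)))) h1)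
    exact le_iSup (fun _ : d * (∑ t, j t) ≤ u =>
      Submodule.map (LinearMap.mulLeft ℂ (∏ t, P t ^ j t))
        (homogeneousSubmodule (Fin (n + 1)) ℂ (u - d * (∑ t, j t)))) h2
  -- (A) P^i · V_m lands in W_i
  have hA : Submodule.map (LinearMap.mulLeft ℂ Pi)
      (homogeneousSubmodule (Fin (n + 1)) ℂ m) ≤ czFiltration n d u P i :=
    le_cz i i le_rfl hi
  -- (B) decomposition of W_i
  have hB : czFiltration n d u P i ≤ Submodule.map (LinearMap.mulLeft ℂ Pi)
      (homogeneousSubmodule (Fin (n + 1)) ℂ m) ⊔ czFiltration n d u P i' := by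
    refine iSup_le fun j => iSup_le fun hij => iSup_le fun hju => ?_
    rcases eq_or_lt_of_le hij with heq | hlt2
    · have hij' : i = j := toLex.injective heq
      subst hij'
      exact le_sup_left
    · exact le_sup_of_le_right (le_cz i' j (hsucc j hju hlt2) hju)
  -- (C) forward kernel containment
  have hW'le : czFiltration n d u P i' ≤
      Submodule.restrictScalars ℂ ((CZ.Jhigh P 0 i : Ideal (MvPolynomial (Fin (n + 1)) ℂ)) :
        Submodule (MvPolynomial (Fin (n + 1)) ℂ) (MvPolynomial (Fin (n + 1)) ℂ)) := by
    refine iSup_le fun j => iSup_le fun hij => iSup_le fun hju => ?_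
    rintro x ⟨g, hg, rfl⟩
    show (∏ t, P t ^ j t) * g ∈ CZ.Jhigh P 0 i
    refine Ideal.mul_mem_right g _ (Ideal.subset_span ⟨j, ?_, (CZ.prodHigh_zero P j).symm⟩)
    exact CZ.lexAbove_zero (lt_of_lt_of_le hlt hij)
  have hC : ∀ f : MvPolynomial (Fin (n + 1)) ℂ,
      Pi * f ∈ czFiltration n d u P i' → f ∈ CZ.Ilow P n := by
    intro f hf
    refine CZ.key P hPreg n 0 (by omega) i f ?_
    rw [CZ.prodHigh_zero]
    exact Submodule.mem_sup_right (hW'le hf)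
  -- (D) backward kernel containment
  have hD : ∀ f : MvPolynomial (Fin (n + 1)) ℂ,
      f ∈ homogeneousSubmodule (Fin (n + 1)) ℂ m → f ∈ CZ.Ilow P n →
      Pi * f ∈ czFiltration n d u P i' := by
    intro f hfV hfI
    obtain ⟨h, hhom, -, hdec⟩ := CZ.span_homog_decomp (by omega) hdm hPhom
      (fun s : Fin n => (s : ℕ) < n) ((mem_homogeneousSubmodule _ _).1 hfV) hfI
    rw [hdec, Finset.mul_sum]
    refine Submodule.sum_mem _ fun s _ => ?_
    set j := fun t => i t + (if t = s then 1 else 0) with hj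
    have hprod : (∏ t, P t ^ j t) = Pi * P s := by
      rw [hPi]
      have h1 : ∀ t, P t ^ j t = P t ^ i t * (if t = s then P t else 1) := by
        intro t
        rw [hj, pow_add]
        congr 1
        split_ifs <;> simp
      simp_rw [h1]
      rw [Finset.prod_mul_distrib, Finset.prod_ite_eq' Finset.univ s (fun t => P t)]
      simp
    have hjsum : (∑ t, j t) = (∑ t, i t) + 1 := by
      rw [hj, Finset.sum_add_distrib, Finset.sum_ite_eq' Finset.univ s (fun _ => 1)]
      simp
    have hju : d * (∑ t, j t) ≤ u := by
      rw [hjsum, Nat.mul_add, Nat.mul_one]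
      omega
    have hlt2 : toLex i < toLex j := by
      show ∃ s₀, (∀ t, t < s₀ → i t = j t) ∧ i s₀ < j s₀
      refine ⟨s, fun t ht => ?_, ?_⟩
      · rw [hj]
        simp [ne_of_lt ht]
      · rw [hj]
        simp
    refine le_cz i' j (hsucc j hju hlt2) hju ?_
    refine ⟨h s, ?_, ?_⟩
    · have harith : u - d * (∑ t, j t) = m - d := by
        rw [hjsum, Nat.mul_add, Nat.mul_one]
        omega
      rw [harith]
      exact (mem_homogeneousSubmodule _ _).2 (hhom s)
    · show (∏ t, P t ^ j t) * h s = Pi * (P s * h s)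
      rw [hprod, mul_assoc]
  -- the linear map and its properties
  set Vm := homogeneousSubmodule (Fin (n + 1)) ℂ m with hVm
  set K := Submodule.comap (czFiltration n d u P i).subtype (czFiltration n d u P i') with hK
  set μ : Vm →ₗ[ℂ] (czFiltration n d u P i) :=
    LinearMap.codRestrict (czFiltration n d u P i)
      ((LinearMap.mulLeft ℂ Pi).comp Vm.subtype)
      (fun f => hA ⟨f.1, f.2, rfl⟩) with hμ
  set φ : Vm →ₗ[ℂ] ((czFiltration n d u P i) ⧸ K) := K.mkQ.comp μ with hφ
  have hsurj : Function.Surjective φ := by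
    intro z
    obtain ⟨x, rfl⟩ := K.mkQ_surjective z
    obtain ⟨y, hy, z', hz', hyz⟩ := Submodule.mem_sup.mp (hB x.2)
    obtain ⟨f, hf, rfl⟩ := hy
    refine ⟨⟨f, hf⟩, ?_⟩
    show K.mkQ (μ ⟨f, hf⟩) = K.mkQ x
    rw [Submodule.mkQ_apply, Submodule.mkQ_apply, Submodule.Quotient.eq]
    show (↑(μ ⟨f, hf⟩) : MvPolynomial (Fin (n + 1)) ℂ) - ↑x ∈ czFiltration n d u P i'
    have hμval : (↑(μ ⟨f, hf⟩) : MvPolynomial (Fin (n + 1)) ℂ) = Pi * f := rfl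
    rw [hμval]
    have hz : Pi * f - (x : MvPolynomial (Fin (n + 1)) ℂ) = -z' := by
      rw [← hyz]
      show Pi * f - (Pi * f + z') = -z'
      ring
    rw [hz]
    exact Submodule.neg_mem _ hz'
  have hker : LinearMap.ker φ
      = Submodule.comap Vm.subtype ((CZ.Ilow P n).restrictScalars ℂ) := by
    ext f
    rw [LinearMap.mem_ker, hφ, LinearMap.comp_apply, Submodule.mkQ_apply,
      Submodule.Quotient.mk_eq_zero, hK, Submodule.mem_comap]
    have hμval : ((czFiltration n d u P i).subtype (μ f)) = Pi * f.1 := rfl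
    rw [hμval, Submodule.mem_comap]
    constructor
    · intro hmem
      exact hC f.1 hmem
    · intro hmem
      exact hD f.1 f.2 hmem
  have e := LinearMap.quotKerEquivOfSurjective φ hsurj
  have hfr1 : Module.finrank ℂ ((czFiltration n d u P i) ⧸ K)
      = Module.finrank ℂ (Vm ⧸ LinearMap.ker φ) := e.finrank_eq.symm
  have hfr2 := Submodule.finrank_quotient_add_finrank (LinearMap.ker φ)
  have hkerIV : LinearMap.ker φ = Submodule.comap Vm.subtype (CZ.IV d P n m) := by
    rw [hker]
    ext x
    simp only [Submodule.mem_comap, CZ.IV, Submodule.mem_inf]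
    exact ⟨fun hx => ⟨hx, x.2⟩, fun hx => hx.1⟩
  have hfr3 : Module.finrank ℂ (LinearMap.ker φ) = Module.finrank ℂ (CZ.IV d P n m) := by
    rw [hkerIV]
    exact (Submodule.comapSubtypeEquivOfLe (inf_le_right :
      (CZ.Ilow P n).restrictScalars ℂ ⊓ Vm ≤ Vm)).finrank_eq
  have hmain := CZ.finrank_IV_add_Nc hPhom hPreg hd n le_rfl m
  rw [← hVm] at hmain
  have htop : CZ.Nc n d n m = d ^ n := CZ.Nc_top (by
    calc n * (d - 1) ≤ n * d := Nat.mul_le_mul_left n (by omega)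
      _ ≤ m := by omega)
  rw [hfr1]
  omega
end

section
/- Let N ≥ k ≥ 0 be integers and M ≥ 0 a real number. Let a_1 ≥ a_2 ≥ ⋯ ≥ a_{N+1} ≥ 0 be real numbers, and let b_1, …, b_{k+1} be nonnegative real numbers with b_1 ≥ a_1 and b_j ≥ a_{N−k+j} for 2 ≤ j ≤ k+1. Then Σ_{i=1}^{N+1} max(a_i − M, 0) ≤ (N−k+1) · Σ_{j=1}^{k+1} max(b_j − M, 0). -/
/-- Let `N ≥ k ≥ 0`, `M ≥ 0`. If `a_1 ≥ ⋯ ≥ a_{N+1} ≥ 0`, and `b_1, …, b_{k+1} ≥ 0`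
satisfy `b_1 ≥ a_1` and `b_j ≥ a_{N−k+j}` for `2 ≤ j ≤ k+1`, then
`Σ_{i=1}^{N+1} max(a_i − M, 0) ≤ (N−k+1) · Σ_{j=1}^{k+1} max(b_j − M, 0)`.
(Indices are `0`-based below.) -/
theorem stmt_13 (N k : ℕ) (hkN : k ≤ N) (M : ℝ) (hM : 0 ≤ M)
    (a : Fin (N + 1) → ℝ) (ha0 : ∀ i, 0 ≤ a i)
    (hmono : ∀ i j : Fin (N + 1), i ≤ j → a j ≤ a i)
    (b : Fin (k + 1) → ℝ) (hb0 : ∀ j, 0 ≤ b j)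
    (hb1 : a 0 ≤ b 0)
    (hbj : ∀ j : Fin (k + 1), 1 ≤ j.val →
      a ⟨N - k + j.val, by have := j.isLt; omega⟩ ≤ b j) :
    ∑ i, max (a i - M) 0 ≤ ((N : ℝ) - (k : ℝ) + 1) * ∑ j, max (b j - M) 0 := by
  have hf : ∀ x y : ℝ, x ≤ y → max (x - M) 0 ≤ max (y - M) 0 := fun x y h =>
    max_le_max (by linarith) le_rfl
  set g : Fin (N + 1) → Fin (k + 1) := fun i =>
    if _ : i.val ≤ N - k then 0 else ⟨i.val - (N - k), by omega⟩ with hg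
  have hbound : ∀ i, max (a i - M) 0 ≤ max (b (g i) - M) 0 := by
    intro i
    apply hf
    by_cases h : i.val ≤ N - k
    · simp only [hg, h, dif_pos]
      exact le_trans (hmono 0 i (by simp [Fin.le_def])) hb1
    · simp only [hg, h, dif_neg, not_false_iff]
      have hj := hbj ⟨i.val - (N - k), by omega⟩ (by simp; omega)
      have he : (⟨N - k + ((⟨i.val - (N - k), by omega⟩ : Fin (k+1)).val), by omega⟩ :
          Fin (N + 1)) = i := by
        ext; simp; omega
      rwa [he] at hj
  have hchar : ∀ i j, g i = j ↔
      (j.val = 0 ∧ i.val ≤ N - k) ∨ (1 ≤ j.val ∧ i.val = N - k + j.val) := by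
    intro i j
    constructor
    · intro hgi
      by_cases h : i.val ≤ N - k
      · left
        simp only [hg, h, dif_pos] at hgi
        exact ⟨by rw [← hgi]; rfl, h⟩
      · right
        simp only [hg, h, dif_neg, not_false_iff] at hgi
        have : j.val = i.val - (N - k) := by rw [← hgi]
        omega
    · rintro (⟨h1, h2⟩ | ⟨h1, h2⟩)
      · simp only [hg, h2, dif_pos]
        ext; simp [h1.symm]; omega
      · have h3 : ¬ i.val ≤ N - k := by omega
        simp only [hg, h3, dif_neg, not_false_iff]
        ext; simp; omega
  have hcard : ∀ j : Fin (k + 1),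
      (Finset.univ.filter fun i => g i = j).card ≤ N - k + 1 := by
    intro j
    calc (Finset.univ.filter fun i => g i = j).card
        ≤ (Finset.range (N - k + 1)).card := by
          apply Finset.card_le_card_of_injOn (fun i => min i.val (N - k))
          · intro i hi
            exact Finset.mem_range.mpr (lt_of_le_of_lt (min_le_right _ _) (by omega))
          · intro i1 h1 i2 h2 hmin
            simp only [Finset.coe_filter, Set.mem_setOf_eq, Finset.mem_univ, true_and] at h1 h2
            rw [hchar] at h1 h2
            simp only at hmin
            ext
            omega
      _ = N - k + 1 := Finset.card_range _
  calc ∑ i, max (a i - M) 0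
      ≤ ∑ i, max (b (g i) - M) 0 := Finset.sum_le_sum fun i _ => hbound i
    _ = ∑ j, ∑ i ∈ Finset.univ.filter (fun i => g i = j), max (b (g i) - M) 0 :=
        (Finset.sum_fiberwise Finset.univ g _).symm
    _ = ∑ j, ∑ i ∈ Finset.univ.filter (fun i => g i = j), max (b j - M) 0 := by
        refine Finset.sum_congr rfl fun j _ => Finset.sum_congr rfl fun i hi => ?_
        rw [Finset.mem_filter] at hi
        rw [hi.2]
    _ = ∑ j, ((Finset.univ.filter fun i => g i = j).card : ℝ) * max (b j - M) 0 := by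
        simp [Finset.sum_const, nsmul_eq_mul]
    _ ≤ ∑ j, ((N : ℝ) - (k : ℝ) + 1) * max (b j - M) 0 := by
        refine Finset.sum_le_sum fun j _ => ?_
        apply mul_le_mul_of_nonneg_right _ (le_max_right _ _)
        have := hcard j
        have : ((Finset.univ.filter fun i => g i = j).card : ℝ) ≤ ((N - k + 1 : ℕ) : ℝ) := by
          exact_mod_cast this
        calc ((Finset.univ.filter fun i => g i = j).card : ℝ)
            ≤ ((N - k + 1 : ℕ) : ℝ) := this
          _ = (N : ℝ) - (k : ℝ) + 1 := by push_cast [Nat.cast_sub hkN]; ring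
    _ = ((N : ℝ) - (k : ℝ) + 1) * ∑ j, max (b j - M) 0 := by
        rw [Finset.mul_sum]
end

section
/- Let g_1, …, g_K : ℂ → ℂ be holomorphic functions and let W = det(g_j^{(i−1)})_{1 ≤ i, j ≤ K} be their Wronskian, where g^{(i)} denotes the i-th derivative. Assume W is not identically zero. Then for every point z_0 ∈ ℂ, the order of vanishing of W at z_0 satisfies ord_{z_0}(W) ≥ Σ_{j=1}^{K} max(0, ord_{z_0}(g_j) − (K−1)). -/
open Filter Topology

/-- `f` has a local factorization `(z - z₀)^n * h z` with `h` analytic at `z₀`. -/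
def VRep (f : ℂ → ℂ) (z₀ : ℂ) (n : ℕ) : Prop :=
  ∃ h : ℂ → ℂ, AnalyticAt ℂ h z₀ ∧ ∀ᶠ z in 𝓝 z₀, f z = (z - z₀) ^ n * h z

lemma analyticAt_deriv {f : ℂ → ℂ} {z₀ : ℂ} (hf : AnalyticAt ℂ f z₀) :
    AnalyticAt ℂ (deriv f) z₀ :=
  (AnalyticOnNhd.deriv (s := {z | AnalyticAt ℂ f z}) (fun _ hz => hz)) z₀ hf

lemma rep_of_le_order {f : ℂ → ℂ} {z₀ : ℂ} {n : ℕ} (hf : AnalyticAt ℂ f z₀)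
    (hn : (n : ℕ∞) ≤ analyticOrderAt f z₀) : VRep f z₀ n := by
  rcases eq_or_ne (analyticOrderAt f z₀) ⊤ with h | h
  · refine ⟨0, analyticAt_const, ?_⟩
    filter_upwards [analyticOrderAt_eq_top.mp h] with z hz
    simp [hz]
  · set m := (analyticOrderAt f z₀).toNat with hmdef
    have hm : (m : ℕ∞) = analyticOrderAt f z₀ := ENat.coe_toNat h
    have hnm : n ≤ m := by exact_mod_cast hm ▸ hn
    obtain ⟨g, hg, _, hge⟩ := hf.analyticOrderAt_eq_natCast.mp hm.symm
    refine ⟨fun z => (z - z₀) ^ (m - n) * g z,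
      ((analyticAt_id.sub analyticAt_const).pow _).mul hg, ?_⟩
    filter_upwards [hge] with z hz
    rw [hz, smul_eq_mul, ← mul_assoc, ← pow_add, Nat.add_sub_cancel' hnm]

lemma le_order_of_rep {f : ℂ → ℂ} {z₀ : ℂ} {n : ℕ} (hf : AnalyticAt ℂ f z₀)
    (h : VRep f z₀ n) : (n : ℕ∞) ≤ analyticOrderAt f z₀ := by
  rcases eq_or_ne (analyticOrderAt f z₀) ⊤ with htop | htop
  · simp [htop]
  set m := (analyticOrderAt f z₀).toNat with hmdef
  have hm : (m : ℕ∞) = analyticOrderAt f z₀ := ENat.coe_toNat htop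
  obtain ⟨g, hg, hgne, hge⟩ := hf.analyticOrderAt_eq_natCast.mp hm.symm
  obtain ⟨h', hh, hfe⟩ := h
  rw [← hm, Nat.cast_le]
  by_contra hlt
  push_neg at hlt
  apply hgne
  have key : ∀ᶠ z in 𝓝[≠] z₀, g z = (z - z₀) ^ (n - m) * h' z := by
    rw [eventually_nhdsWithin_iff]
    filter_upwards [hge, hfe] with z h1 h2 hz
    have hsub : (z - z₀) ≠ 0 := sub_ne_zero.mpr hz
    have hpow : (z - z₀) ^ n = (z - z₀) ^ m * (z - z₀) ^ (n - m) := by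
      rw [← pow_add]; congr 1; omega
    have : (z - z₀) ^ m * g z = (z - z₀) ^ m * ((z - z₀) ^ (n - m) * h' z) := by
      rw [← mul_assoc, ← hpow, ← smul_eq_mul, ← h1, h2]
    exact mul_left_cancel₀ (pow_ne_zero m hsub) this
  have hev := (hg.frequently_eq_iff_eventually_eq
    (((analyticAt_id.sub analyticAt_const).pow _).mul hh)).mp key.frequently
  have h0 := hev.self_of_nhds
  simpa [zero_pow (by omega : n - m ≠ 0)] using h0

lemma VRep.mono {f : ℂ → ℂ} {z₀ : ℂ} {n m : ℕ} (h : VRep f z₀ n) (hmn : m ≤ n) :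
    VRep f z₀ m := by
  obtain ⟨h', hh, hfe⟩ := h
  refine ⟨fun z => (z - z₀) ^ (n - m) * h' z,
    ((analyticAt_id.sub analyticAt_const).pow _).mul hh, ?_⟩
  filter_upwards [hfe] with z hz
  rw [hz, ← mul_assoc, ← pow_add, Nat.add_sub_cancel' hmn]

lemma VRep.deriv' {f : ℂ → ℂ} {z₀ : ℂ} {n : ℕ} (h : VRep f z₀ n) :
    VRep (deriv f) z₀ (n - 1) := by
  obtain ⟨h', hh, hfe⟩ := h
  have hd : deriv f =ᶠ[𝓝 z₀] deriv (fun z => (z - z₀) ^ n * h' z) :=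
    Filter.EventuallyEq.deriv hfe
  match n with
  | 0 =>
    refine ⟨deriv h', analyticAt_deriv hh, ?_⟩
    have : (fun z : ℂ => (z - z₀) ^ 0 * h' z) = h' := by funext z; simp
    filter_upwards [hd] with z hz
    simpa [this] using hz
  | (m + 1) =>
    refine ⟨fun z => ((m : ℂ) + 1) * h' z + (z - z₀) * deriv h' z,
      (analyticAt_const.mul hh).add
        ((analyticAt_id.sub analyticAt_const).mul (analyticAt_deriv hh)), ?_⟩
    filter_upwards [hd, hh.eventually_analyticAt] with z h1 h2
    have hh' : HasDerivAt h' (deriv h' z) z := h2.differentiableAt.hasDerivAt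
    have hp : HasDerivAt (fun w : ℂ => (w - z₀) ^ (m + 1))
        ((m + 1 : ℂ) * (z - z₀) ^ m) z := by
      simpa using ((hasDerivAt_id z).sub_const z₀).fun_pow (m + 1)
    have hmul := hp.fun_mul hh'
    rw [h1, hmul.deriv]
    simp only [Nat.add_sub_cancel]
    ring

lemma VRep.const_mul {f : ℂ → ℂ} {z₀ : ℂ} {n : ℕ} (c : ℂ) (h : VRep f z₀ n) :
    VRep (fun z => c * f z) z₀ n := by
  obtain ⟨h', hh, hfe⟩ := h
  refine ⟨fun z => c * h' z, analyticAt_const.mul hh, ?_⟩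
  filter_upwards [hfe] with z hz
  rw [hz]; ring

lemma VRep.sum {ι : Type*} {z₀ : ℂ} {n : ℕ} (s : Finset ι) (f : ι → ℂ → ℂ)
    (h : ∀ a ∈ s, VRep (f a) z₀ n) : VRep (fun z => ∑ a ∈ s, f a z) z₀ n := by
  classical
  induction s using Finset.induction with
  | empty => exact ⟨0, analyticAt_const, by simp⟩
  | @insert a s ha ih =>
    obtain ⟨h₁, hh₁, he₁⟩ := h a (Finset.mem_insert_self a s)
    obtain ⟨h₂, hh₂, he₂⟩ := ih fun b hb => h b (Finset.mem_insert_of_mem hb)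
    refine ⟨fun z => h₁ z + h₂ z, hh₁.add hh₂, ?_⟩
    filter_upwards [he₁, he₂] with z hz₁ hz₂
    rw [Finset.sum_insert ha, hz₁, hz₂]; ring

lemma VRep.prod {ι : Type*} {z₀ : ℂ} (s : Finset ι) (f : ι → ℂ → ℂ) (e : ι → ℕ)
    (h : ∀ a ∈ s, VRep (f a) z₀ (e a)) :
    VRep (fun z => ∏ a ∈ s, f a z) z₀ (∑ a ∈ s, e a) := by
  classical
  induction s using Finset.induction with
  | empty => exact ⟨1, analyticAt_const, by simp⟩
  | @insert a s ha ih =>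
    obtain ⟨h₁, hh₁, he₁⟩ := h a (Finset.mem_insert_self a s)
    obtain ⟨h₂, hh₂, he₂⟩ := ih fun b hb => h b (Finset.mem_insert_of_mem hb)
    refine ⟨fun z => h₁ z * h₂ z, hh₁.mul hh₂, ?_⟩
    filter_upwards [he₁, he₂] with z hz₁ hz₂
    rw [Finset.prod_insert ha, Finset.sum_insert ha, hz₁, hz₂, pow_add]; ring

lemma iteratedDeriv_zero_fun {i : ℕ} : iteratedDeriv i (fun _ : ℂ => (0 : ℂ)) = fun _ => 0 := by
  induction i with
  | zero => simp [iteratedDeriv_zero]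
  | succ i ih => rw [iteratedDeriv_succ, ih]; funext z; simp

/-- Let `g_1, …, g_K : ℂ → ℂ` be entire and let `W = det(g_j^{(i−1)})` be their
Wronskian, assumed not identically zero. Then at every `z₀ ∈ ℂ` the vanishing
order of `W` satisfies `ord_{z₀}(W) ≥ Σ_j max(0, ord_{z₀}(g_j) − (K−1))`
(the subtraction on `ℕ∞` below is truncated, so it equals the positive part). -/
theorem stmt_15 (K : ℕ) (g : Fin K → ℂ → ℂ) (hg : ∀ j, Differentiable ℂ (g j))
    (hW : ∃ z : ℂ,
      Matrix.det (Matrix.of fun i j : Fin K => iteratedDeriv i.val (g j) z) ≠ 0) :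
    ∀ z₀ : ℂ,
      ∀ hWa : AnalyticAt ℂ
        (fun z : ℂ => Matrix.det (Matrix.of fun i j : Fin K => iteratedDeriv i.val (g j) z)) z₀,
      ∑ j : Fin K, (analyticOrderAt (g j) z₀ - ((K - 1 : ℕ) : ℕ∞)) ≤
        analyticOrderAt
          (fun z : ℂ => Matrix.det (Matrix.of fun i j : Fin K => iteratedDeriv i.val (g j) z)) z₀ := by
  intro z₀ hWa
  -- each order is finite
  have hord : ∀ j, analyticOrderAt (g j) z₀ ≠ ⊤ := by
    intro j hj
    have h0 : ∀ᶠ z in 𝓝 z₀, g j z = 0 := analyticOrderAt_eq_top.mp hj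
    have hao : AnalyticOnNhd ℂ (g j) Set.univ := fun z _ => (hg j).analyticAt z
    have hzero : Set.EqOn (g j) 0 Set.univ :=
      hao.eqOn_zero_of_preconnected_of_frequently_eq_zero isPreconnected_univ (Set.mem_univ z₀)
        (h0.filter_mono nhdsWithin_le_nhds).frequently
    obtain ⟨z, hz⟩ := hW
    apply hz
    apply Matrix.det_eq_zero_of_column_eq_zero j
    intro i
    have hgj : g j = fun _ => (0 : ℂ) := funext fun w => hzero (Set.mem_univ w)
    simp [Matrix.of_apply, hgj, iteratedDeriv_zero_fun]
  have hN : ∀ j, ∃ n : ℕ, (n : ℕ∞) = analyticOrderAt (g j) z₀ :=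
    fun j => ⟨(analyticOrderAt (g j) z₀).toNat, ENat.coe_toNat (hord j)⟩
  choose N hN using hN
  set M : ℕ := ∑ j : Fin K, (N j - (K - 1)) with hM
  have hcast : ∑ j : Fin K, (analyticOrderAt (g j) z₀ - ((K - 1 : ℕ) : ℕ∞)) = (M : ℕ∞) := by
    rw [hM, Nat.cast_sum]
    refine Finset.sum_congr rfl fun j _ => ?_
    rw [← hN j, ← ENat.coe_sub]
  rw [hcast]
  apply le_order_of_rep hWa
  -- representation of each iterated derivative
  have hrep_iter : ∀ (j : Fin K) (i : ℕ), VRep (iteratedDeriv i (g j)) z₀ (N j - i) := by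
    intro j i
    induction i with
    | zero =>
      simpa [iteratedDeriv_zero] using
        rep_of_le_order ((hg j).analyticAt z₀) (le_of_eq (hN j))
    | succ i ih =>
      rw [iteratedDeriv_succ, show N j - (i + 1) = N j - i - 1 from by omega]
      exact ih.deriv'
  have hWeq : (fun z : ℂ =>
      Matrix.det (Matrix.of fun i j : Fin K => iteratedDeriv i.val (g j) z)) =
      fun z => ∑ σ : Equiv.Perm (Fin K),
        ((Equiv.Perm.sign σ : ℤ) : ℂ) * ∏ i : Fin K, iteratedDeriv (σ i).val (g i) z := by
    funext z
    rw [Matrix.det_apply']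
    simp [Matrix.of_apply]
  rw [hWeq]
  apply VRep.sum
  intro σ _
  apply VRep.const_mul
  have hprod := VRep.prod Finset.univ (fun i z => iteratedDeriv (σ i).val (g i) z)
    (fun i => N i - (σ i).val) (fun i _ => hrep_iter i (σ i).val)
  exact hprod.mono (Finset.sum_le_sum fun i _ =>
    Nat.sub_le_sub_left (by omega : (σ i).val ≤ K - 1) (N i))
end

section
/- Let n ≥ 1, k ≥ 1 and N ≥ k be integers, let Q_1, …, Q_{N+1} ∈ ℂ[x_0, …, x_n] be homogeneous polynomials of the same degree d ≥ 1, and let P_1 = Q_1 and P_t = Σ_{j=2}^{N−k+t} c_{tj} Q_j with arbitrary coefficients c_{tj} ∈ ℂ for t = 2, …, k+1. Then there exists a constant D > 0 such that for every ω ∈ ℂ^{n+1} satisfying |Q_1(ω)| ≤ |Q_2(ω)| ≤ ⋯ ≤ |Q_{N+1}(ω)|, one has ∏_{t=1}^{k+1} |P_t(ω)|^{N−k+1} ≤ D · ‖ω‖^{(N−k)kd} · ∏_{j=1}^{N+1} |Q_j(ω)|, where ‖ω‖ = (|ω_0|^2 + ⋯ + |ω_n|^2)^{1/2}. -/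
open MvPolynomial

lemma homog_bound {σ : Type*} [Fintype σ] {d : ℕ} (Q : MvPolynomial σ ℂ)
    (hQ : Q.IsHomogeneous d) :
    ∃ C : ℝ, 0 ≤ C ∧ ∀ ω : σ → ℂ,
      ‖eval ω Q‖ ≤ C * (Real.sqrt (∑ i, ‖ω i‖ ^ 2)) ^ d := by
  refine ⟨∑ m ∈ Q.support, ‖coeff m Q‖,
    Finset.sum_nonneg fun _ _ => norm_nonneg _, fun ω => ?_⟩
  set s := Real.sqrt (∑ i, ‖ω i‖ ^ 2) with hs_def
  have hs : 0 ≤ s := Real.sqrt_nonneg _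
  have hωs : ∀ i, ‖ω i‖ ≤ s := by
    intro i
    rw [hs_def, show ‖ω i‖ = Real.sqrt (‖ω i‖ ^ 2) by
      rw [Real.sqrt_sq (norm_nonneg _)]]
    exact Real.sqrt_le_sqrt (Finset.single_le_sum
      (fun j _ => sq_nonneg (‖ω j‖)) (Finset.mem_univ i))
  rw [eval_eq', Finset.sum_mul]
  refine le_trans (norm_sum_le _ _) (Finset.sum_le_sum fun m hm => ?_)
  rw [norm_mul, norm_prod]
  refine mul_le_mul_of_nonneg_left ?_ (norm_nonneg _)
  have h1 : ∀ i ∈ Finset.univ, ‖ω i ^ m i‖ ≤ s ^ m i := fun i _ => by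
    rw [norm_pow]; exact pow_le_pow_left₀ (norm_nonneg _) (hωs i) _
  refine le_trans (Finset.prod_le_prod (fun i _ => norm_nonneg _) h1) ?_
  rw [Finset.prod_pow_eq_pow_sum]
  have hdeg : ∑ i, m i = d := by
    have := hQ (mem_support_iff.mp hm)
    rw [show Finsupp.weight (1 : σ → ℕ) = Finsupp.weight fun _ => 1 from rfl, ← Finsupp.degree_eq_weight_one] at this
    rw [← this, Finsupp.degree_apply]
    exact (Finset.sum_subset (Finset.subset_univ _)
      (fun i _ hi => Finsupp.notMem_support_iff.mp hi)).symm
  rw [hdeg]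

/-- Let `Q_1, …, Q_{N+1}` be homogeneous polynomials of the same degree `d ≥ 1`,
`P_1 = Q_1` and `P_t = Σ_{j=2}^{N−k+t} c_{tj}Q_j` for `t = 2, …, k+1`. Then there
is `D > 0` such that for all `ω` with `|Q_1(ω)| ≤ ⋯ ≤ |Q_{N+1}(ω)|`:
`∏_t |P_t(ω)|^{N−k+1} ≤ D·‖ω‖^{(N−k)kd}·∏_j |Q_j(ω)|`.
(Indices are `0`-based below: `P 0 = Q 0` and, for `1 ≤ t ≤ k`,
`P t` is a linear combination of the `Q j` with `1 ≤ j ≤ N−k+t`.) -/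
theorem stmt_16 (n k N d : ℕ) (hn : 1 ≤ n) (hk : 1 ≤ k) (hkN : k ≤ N) (hd : 1 ≤ d)
    (Q : Fin (N + 1) → MvPolynomial (Fin (n + 1)) ℂ)
    (hQhom : ∀ j, (Q j).IsHomogeneous d)
    (c : Fin (k + 1) → Fin (N + 1) → ℂ)
    (P : Fin (k + 1) → MvPolynomial (Fin (n + 1)) ℂ)
    (hP0 : P 0 = Q 0)
    (hPt : ∀ t : Fin (k + 1), 1 ≤ t.val →
      P t = ∑ j ∈ Finset.univ.filter
          (fun j : Fin (N + 1) => 1 ≤ j.val ∧ j.val ≤ N - k + t.val),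
        c t j • Q j) :
    ∃ D : ℝ, 0 < D ∧ ∀ ω : Fin (n + 1) → ℂ,
      (∀ i j : Fin (N + 1), i ≤ j →
        ‖eval ω (Q i)‖ ≤ ‖eval ω (Q j)‖) →
      ∏ t : Fin (k + 1), ‖eval ω (P t)‖ ^ (N - k + 1)
        ≤ D * (Real.sqrt (∑ i, ‖ω i‖ ^ 2)) ^ ((N - k) * k * d)
            * ∏ j : Fin (N + 1), ‖eval ω (Q j)‖ := by
  -- uniform upper-bound constant for the homogeneous polynomials
  choose C0 hC0 hC0le using fun j => homog_bound (Q j) (hQhom j)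
  set C : ℝ := 1 + ∑ j, C0 j with hC_def
  have hC1 : 1 ≤ C := le_add_of_nonneg_right (Finset.sum_nonneg fun j _ => hC0 j)
  have hC0C : ∀ j, C0 j ≤ C := fun j => by
    have : C0 j ≤ ∑ j, C0 j :=
      Finset.single_le_sum (fun j _ => hC0 j) (Finset.mem_univ j)
    linarith
  -- uniform bound for the coefficients
  set B : ℝ := 1 + ∑ t : Fin (k + 1), ∑ j : Fin (N + 1), ‖c t j‖ with hB_def
  have hB1 : 1 ≤ B := le_add_of_nonneg_right <| Finset.sum_nonneg fun t _ =>
    Finset.sum_nonneg fun j _ => norm_nonneg _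
  have hB0 : 0 ≤ B := by linarith
  refine ⟨B ^ ((N - k + 1) * k) * C ^ ((N - k) * k), by positivity, fun ω h => ?_⟩
  set s : ℝ := Real.sqrt (∑ i, ‖ω i‖ ^ 2) with hs_def
  have hs : 0 ≤ s := Real.sqrt_nonneg _
  set a : Fin (N + 1) → ℝ := fun j => ‖eval ω (Q j)‖ with ha_def
  have ha : ∀ j, 0 ≤ a j := fun j => norm_nonneg _
  have haC : ∀ j, a j ≤ C * s ^ d := fun j =>
    le_trans (hC0le j ω) (mul_le_mul_of_nonneg_right (hC0C j) (pow_nonneg hs d))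
  -- the index map t ↦ N - k + t
  set f : Fin (k + 1) → Fin (N + 1) := fun t => ⟨N - k + t.val, by omega⟩ with hf_def
  -- pointwise bound for P t, t ≥ 1
  have hPbound : ∀ t : Fin (k + 1), 1 ≤ t.val →
      ‖eval ω (P t)‖ ≤ B * a (f t) := by
    intro t ht
    rw [hPt t ht, map_sum]
    refine le_trans (norm_sum_le _ _) ?_
    have step : ∀ j ∈ Finset.univ.filter
        (fun j : Fin (N + 1) => 1 ≤ j.val ∧ j.val ≤ N - k + t.val),
        ‖eval ω (c t j • Q j)‖ ≤ ‖c t j‖ * a (f t) := by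
      intro j hj
      rw [smul_eval, norm_mul]
      refine mul_le_mul_of_nonneg_left ?_ (norm_nonneg _)
      refine h j (f t) ?_
      have := (Finset.mem_filter.mp hj).2.2
      simp only [hf_def, Fin.le_def]
      omega
    refine le_trans (Finset.sum_le_sum step) ?_
    rw [← Finset.sum_mul]
    refine mul_le_mul_of_nonneg_right ?_ (ha _)
    calc ∑ j ∈ Finset.univ.filter
          (fun j : Fin (N + 1) => 1 ≤ j.val ∧ j.val ≤ N - k + t.val),
          ‖c t j‖
        ≤ ∑ j : Fin (N + 1), ‖c t j‖ :=
          Finset.sum_le_sum_of_subset_of_nonneg (Finset.filter_subset _ _)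
            (fun j _ _ => norm_nonneg _)
      _ ≤ B := by
          rw [hB_def]
          have : ∑ j : Fin (N + 1), ‖c t j‖
              ≤ ∑ t : Fin (k + 1), ∑ j : Fin (N + 1), ‖c t j‖ :=
            Finset.single_le_sum
              (f := fun t : Fin (k + 1) => ∑ j : Fin (N + 1), ‖c t j‖)
              (fun t _ => Finset.sum_nonneg fun j _ =>
                norm_nonneg _) (Finset.mem_univ t)
          linarith
  -- the filter of t = 0
  have hfilt0 : (Finset.univ.filter fun t : Fin (k + 1) => ¬ 1 ≤ t.val) = {0} := by
    ext t
    simp only [Finset.mem_filter, Finset.mem_univ, true_and, Finset.mem_singleton,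
      Fin.ext_iff, Fin.val_zero]
    omega
  -- card of the filter of t ≥ 1
  have hcardT : (Finset.univ.filter fun t : Fin (k + 1) => 1 ≤ t.val).card = k := by
    have := Finset.card_filter_add_card_filter_not
      (s := (Finset.univ : Finset (Fin (k + 1)))) (p := fun t => 1 ≤ t.val)
    rw [hfilt0] at this
    simp only [Finset.card_singleton, Finset.card_univ, Fintype.card_fin] at this
    omega
  -- card of the low filter
  have hcardQ : (Finset.univ.filter fun j : Fin (N + 1) => ¬ N - k < j.val).card
      = N - k + 1 := by
    rw [show N - k + 1 = (Finset.range (N - k + 1)).card from (Finset.card_range _).symm]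
    refine Finset.card_nbij' (fun j => j.val) (fun i => ⟨min i N, by omega⟩)
      ?_ ?_ ?_ ?_
    · intro j hj
      simp only [Finset.mem_coe, Finset.mem_filter, Finset.mem_univ, true_and, not_lt] at hj
      simp only [Finset.mem_coe, Finset.mem_range]; omega
    · intro i hi
      simp only [Finset.mem_coe, Finset.mem_range] at hi
      simp only [Finset.mem_coe, Finset.mem_filter, Finset.mem_univ, true_and, not_lt]
      omega
    · intro j hj
      simp only [Finset.mem_coe, Finset.mem_filter, Finset.mem_univ, true_and, not_lt] at hj
      have hjv := j.isLt
      ext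
      simp only [Fin.val_mk]
      omega
    · intro i hi
      simp only [Finset.mem_coe, Finset.mem_range] at hi
      simp only [Fin.val_mk]
      omega
  -- part A : the t = 0 factor
  have partA : a 0 ^ (N - k + 1)
      ≤ ∏ j ∈ Finset.univ.filter (fun j : Fin (N + 1) => ¬ N - k < j.val), a j := by
    calc a 0 ^ (N - k + 1)
        = ∏ _j ∈ Finset.univ.filter (fun j : Fin (N + 1) => ¬ N - k < j.val), a 0 := by
          rw [Finset.prod_const, hcardQ]
      _ ≤ ∏ j ∈ Finset.univ.filter (fun j : Fin (N + 1) => ¬ N - k < j.val), a j :=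
          Finset.prod_le_prod (fun j _ => ha 0) (fun j _ => h 0 j (Fin.zero_le j))
  -- reindexing the high product
  have hreindex : ∏ t ∈ Finset.univ.filter (fun t : Fin (k + 1) => 1 ≤ t.val), a (f t)
      = ∏ j ∈ Finset.univ.filter (fun j : Fin (N + 1) => N - k < j.val), a j := by
    refine Finset.prod_nbij' f (fun j => ⟨min (j.val - (N - k)) k, by omega⟩)
      ?_ ?_ ?_ ?_ ?_
    · intro t ht
      simp only [Finset.mem_filter, Finset.mem_univ, true_and, hf_def, Fin.val_mk] at ht ⊢
      omega
    · intro j hj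
      simp only [Finset.mem_filter, Finset.mem_univ, true_and, Fin.val_mk] at hj ⊢
      have hjN := j.isLt
      omega
    · intro t ht
      simp only [Finset.mem_filter, Finset.mem_univ, true_and] at ht
      have htk := t.isLt
      ext
      simp only [hf_def, Fin.val_mk]
      omega
    · intro j hj
      simp only [Finset.mem_filter, Finset.mem_univ, true_and] at hj
      have hjN := j.isLt
      ext
      simp only [hf_def, Fin.val_mk]
      omega
    · intro t _; rfl
  -- part B : the factors with t ≥ 1
  have partB : ∏ t ∈ Finset.univ.filter (fun t : Fin (k + 1) => 1 ≤ t.val),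
        ‖eval ω (P t)‖ ^ (N - k + 1)
      ≤ (B ^ (N - k + 1) * (C * s ^ d) ^ (N - k)) ^ k
        * ∏ j ∈ Finset.univ.filter (fun j : Fin (N + 1) => N - k < j.val), a j := by
    have hterm : ∀ t ∈ Finset.univ.filter (fun t : Fin (k + 1) => 1 ≤ t.val),
        ‖eval ω (P t)‖ ^ (N - k + 1)
          ≤ B ^ (N - k + 1) * (C * s ^ d) ^ (N - k) * a (f t) := by
      intro t ht
      have ht1 := (Finset.mem_filter.mp ht).2
      calc ‖eval ω (P t)‖ ^ (N - k + 1)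
          ≤ (B * a (f t)) ^ (N - k + 1) :=
            pow_le_pow_left₀ (norm_nonneg _) (hPbound t ht1) _
        _ = B ^ (N - k + 1) * (a (f t) ^ (N - k) * a (f t)) := by
            rw [mul_pow, pow_succ (a (f t)) (N - k)]
        _ ≤ B ^ (N - k + 1) * ((C * s ^ d) ^ (N - k) * a (f t)) := by
            refine mul_le_mul_of_nonneg_left ?_ (pow_nonneg hB0 _)
            exact mul_le_mul_of_nonneg_right
              (pow_le_pow_left₀ (ha _) (haC _) _) (ha _)
        _ = B ^ (N - k + 1) * (C * s ^ d) ^ (N - k) * a (f t) := by ring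
    calc ∏ t ∈ Finset.univ.filter (fun t : Fin (k + 1) => 1 ≤ t.val),
          ‖eval ω (P t)‖ ^ (N - k + 1)
        ≤ ∏ t ∈ Finset.univ.filter (fun t : Fin (k + 1) => 1 ≤ t.val),
            (B ^ (N - k + 1) * (C * s ^ d) ^ (N - k) * a (f t)) :=
          Finset.prod_le_prod (fun t _ => pow_nonneg (norm_nonneg _) _) hterm
      _ = (B ^ (N - k + 1) * (C * s ^ d) ^ (N - k)) ^ k
          * ∏ t ∈ Finset.univ.filter (fun t : Fin (k + 1) => 1 ≤ t.val), a (f t) := by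
          rw [Finset.prod_mul_distrib, Finset.prod_const, hcardT]
      _ = _ := by rw [hreindex]
  -- assemble
  have hsplitP : ∏ t : Fin (k + 1), ‖eval ω (P t)‖ ^ (N - k + 1)
      = (∏ t ∈ Finset.univ.filter (fun t : Fin (k + 1) => 1 ≤ t.val),
          ‖eval ω (P t)‖ ^ (N - k + 1)) * a 0 ^ (N - k + 1) := by
    rw [← Finset.prod_filter_mul_prod_filter_not Finset.univ (fun t : Fin (k + 1) => 1 ≤ t.val),
      hfilt0, Finset.prod_singleton, hP0]
  have hsplitQ : (∏ j ∈ Finset.univ.filter (fun j : Fin (N + 1) => N - k < j.val), a j)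
      * (∏ j ∈ Finset.univ.filter (fun j : Fin (N + 1) => ¬ N - k < j.val), a j)
      = ∏ j : Fin (N + 1), a j :=
    Finset.prod_filter_mul_prod_filter_not Finset.univ _ _
  rw [hsplitP]
  calc (∏ t ∈ Finset.univ.filter (fun t : Fin (k + 1) => 1 ≤ t.val),
          ‖eval ω (P t)‖ ^ (N - k + 1)) * a 0 ^ (N - k + 1)
      ≤ ((B ^ (N - k + 1) * (C * s ^ d) ^ (N - k)) ^ k
          * ∏ j ∈ Finset.univ.filter (fun j : Fin (N + 1) => N - k < j.val), a j)
        * ∏ j ∈ Finset.univ.filter (fun j : Fin (N + 1) => ¬ N - k < j.val), a j := by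
        refine mul_le_mul partB partA (pow_nonneg (ha 0) _) ?_
        exact mul_nonneg (pow_nonneg (mul_nonneg (pow_nonneg hB0 _)
          (pow_nonneg (mul_nonneg (by linarith) (pow_nonneg hs _)) _)) _)
          (Finset.prod_nonneg fun j _ => ha j)
    _ = (B ^ (N - k + 1) * (C * s ^ d) ^ (N - k)) ^ k * ∏ j : Fin (N + 1), a j := by
        rw [mul_assoc, hsplitQ]
    _ = B ^ ((N - k + 1) * k) * C ^ ((N - k) * k) * s ^ ((N - k) * k * d)
          * ∏ j : Fin (N + 1), a j := by
        rw [mul_pow, mul_pow, mul_pow, ← pow_mul, ← pow_mul, ← pow_mul, ← pow_mul,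
          show d * ((N - k) * k) = (N - k) * k * d from by ring]
        ring
end
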